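/- For F ∈ {CR, SO}, let (r,m) be a point of the system of the protocol P^intent in the context γ_intent(F), let i be an agent with front_i(r,m) = 1, and let (l,l') be a move with l in the cyclic interval [next(r,m), lane_i(r,m)). Then (l,l') ∈ Pos_i(r,m) if and only if ¬K_i¬(∃ j ∈ Ag: front_j ∧ lane_j = l ∧ intent_j = l' ∧ going_j) holds at (r,m). -/

import Mathlib

open scoped Classical

noncomputable section

namespace Inter

/-- Actions available to each agent. -/
inductive Act where
  | go
  | noop
deriving DecidableEq

/-- A move through the intersection: an incoming lane paired with an outgoing lane. -/
abbrev Move (kin kout : ℕ) := Fin kin × Fin kout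

/-- An adversary: a conflict-free arrival schedule, a transmission environment and
transmitter/receiver failure functions. -/
structure Adversary (kin kout : ℕ) where
  arrive : ℕ → ℕ × Fin kin × Fin kout
  conflictFree : ∀ i j : ℕ, i ≠ j → (arrive i).1 = (arrive j).1 →
    (arrive i).2.1 ≠ (arrive j).2.1
  T : Set ((Fin kin × ℕ) × (Fin kin × ℕ))
  T_front : ∀ l l' : Fin kin, ((l, 0), (l', 0)) ∈ T
  Ft : ℕ → ℕ → Bool
  Fr : ℕ → ℕ → Bool

/-- The lane component of a sensor reading: an incoming lane, ⊥ (not yet arrived),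
or ⊤ (departed). -/
inductive LaneStatus (kin : ℕ) where
  | inLane (l : Fin kin)
  | notArrived
  | finished

/-- The minimal sensor reading: front, lane and intent. -/
structure Reading (kin kout : ℕ) where
  front : Prop
  lane : LaneStatus kin
  intent : Fin kout

/-- Environment states record the adversary, the time, a queue for each incoming lane
and the set of departed agents. -/
structure EnvState (kin kout : ℕ) where
  adv : Adversary kin kout
  time : ℕ
  queue : Fin kin → List ℕ
  done : Set ℕ

/-- Local states: a memory state together with a sensor reading
(the minimal reading plus possibly extra sensor information). -/
abbrev LState (kin kout : ℕ) (Mem Extra : Type*) := Mem × Reading kin kout × Extra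

/-- Global states: an environment state and local states for all agents. -/
abbrev GState (kin kout : ℕ) (Mem Extra : Type*) :=
  EnvState kin kout × (ℕ → LState kin kout Mem Extra)

/-- A run. -/
abbrev Run (kin kout : ℕ) (Mem Extra : Type*) := ℕ → GState kin kout Mem Extra

/-- An action protocol maps each agent's local state to an action. -/
abbrev Prot (kin kout : ℕ) (Mem Extra : Type*) := ℕ → LState kin kout Mem Extra → Act

variable {kin kout : ℕ} {Mem Extra Msg : Type*}

/-- Agent `i` is at the front of some queue. -/
def isFront (e : EnvState kin kout) (i : ℕ) : Prop :=
  ∃ l : Fin kin, (e.queue l).head? = some i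

/-- The (lane, position) of agent `i`, if it is in some queue. -/
def posAt (e : EnvState kin kout) (i : ℕ) : Option (Fin kin × ℕ) :=
  if h : ∃ l : Fin kin, i ∈ e.queue l then some (h.choose, (e.queue h.choose).idxOf i)
  else none

/-- The intended departure lane of agent `i`, as given by the arrival schedule. -/
def intentOf (e : EnvState kin kout) (i : ℕ) : Fin kout := (e.adv.arrive i).2.2

/-- The move `(lane_i, intent_i)` of agent `i`, if it is in some queue. -/
def moveAt (e : EnvState kin kout) (i : ℕ) : Option (Move kin kout) :=
  (posAt e i).map (fun p => (p.1, intentOf e i))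

/-- The minimal sensor reading of agent `i` in environment state `e`. -/
def minimalReading (e : EnvState kin kout) (i : ℕ) : Reading kin kout where
  front := isFront e i
  lane :=
    if h : ∃ l : Fin kin, i ∈ e.queue l then LaneStatus.inLane h.choose
    else if i ∈ e.done then LaneStatus.finished else LaneStatus.notArrived
  intent := intentOf e i

/-- An information-exchange protocol: initial memories, extra sensor information,
a message function and a memory-update function. -/
structure IEP (kin kout : ℕ) (Mem Extra Msg : Type*) where
  initMem : ℕ → Mem
  extra : EnvState kin kout → ℕ → Extra
  msg : ℕ → LState kin kout Mem Extra → Act → Reading kin kout × Extra → Option Msg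
  upd : ℕ → LState kin kout Mem Extra → Act → Set Msg → Mem

/-- One round of the system: agents act, queues are updated (dequeues for agents that go,
enqueues for new arrivals), new sensor readings are taken, messages are broadcast and
received subject to the transmission environment and the failure functions, and memories
are updated. -/
def step (E : IEP kin kout Mem Extra Msg) (P : Prot kin kout Mem Extra)
    (g : GState kin kout Mem Extra) : GState kin kout Mem Extra :=
  let e := g.1
  let act : ℕ → Act := fun i => P i (g.2 i)
  let q' : Fin kin → List ℕ := fun l =>
    let q1 := match (e.queue l).head? with
      | some i => if act i = Act.go then (e.queue l).tail else e.queue l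
      | none => e.queue l
    if h : ∃ i l', e.adv.arrive i = (e.time + 1, l, l') then q1 ++ [h.choose] else q1
  let done' : Set ℕ := e.done ∪ {i | isFront e i ∧ act i = Act.go}
  let e' : EnvState kin kout := ⟨e.adv, e.time + 1, q', done'⟩
  let sens : ℕ → Reading kin kout × Extra := fun i => (minimalReading e' i, E.extra e' i)
  let rcv : ℕ → Set Msg := fun i =>
    if e.adv.Fr e.time i = true ∧ (posAt e' i).isSome = true then
      {m | ∃ j pj pi, E.msg j (g.2 j) (act j) (sens j) = some m ∧
            e.adv.Ft e.time j = true ∧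
            posAt e' j = some pj ∧ posAt e' i = some pi ∧ (pj, pi) ∈ e.adv.T}
    else ∅
  (e', fun i => (E.upd i (g.2 i) (act i) (rcv i), sens i))

/-- An intersection context: an information-exchange protocol together with an
adversary model. -/
structure Ctx (kin kout : ℕ) (Mem Extra Msg : Type*) where
  iep : IEP kin kout Mem Extra Msg
  adv : Set (Adversary kin kout)

/-- Initial global states: time 0, empty queues, no departed agents, an adversary
from the adversary model, and initial local states. -/
def Init (C : Ctx kin kout Mem Extra Msg) (g : GState kin kout Mem Extra) : Prop :=
  g.1.adv ∈ C.adv ∧ g.1.time = 0 ∧ (∀ l, g.1.queue l = []) ∧ g.1.done = ∅ ∧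
  ∀ i, g.2 i = (C.iep.initMem i, minimalReading g.1 i, C.iep.extra g.1 i)

/-- The interpreted system `I_{γ,P}`: the set of runs of protocol `P` in context `γ`. -/
def Runs (C : Ctx kin kout Mem Extra Msg) (P : Prot kin kout Mem Extra) :
    Set (Run kin kout Mem Extra) :=
  {r | Init C (r 0) ∧ ∀ m, r (m + 1) = step C.iep P (r m)}

/-- `front_i` holds at the point `(r,m)`. -/
def frontAt (r : Run kin kout Mem Extra) (m i : ℕ) : Prop := isFront (r m).1 i

/-- `going_i` abbreviates `front_i ∧ ◯¬front_i`. -/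
def goingAt (r : Run kin kout Mem Extra) (m i : ℕ) : Prop :=
  frontAt r m i ∧ ¬ frontAt r (m + 1) i

/-- `GO(r,m)`: the set of agents that go through the intersection in round `m+1`. -/
def GOs (r : Run kin kout Mem Extra) (m : ℕ) : Set ℕ := {i | goingAt r m i}

/-- Validity: an agent goes through the intersection only from the front of its queue. -/
def ValidityP (C : Ctx kin kout Mem Extra Msg) (P : Prot kin kout Mem Extra) : Prop :=
  ∀ r ∈ Runs C P, ∀ m i, goingAt r m i → frontAt r m i

/-- Safety: agents that go simultaneously have compatible moves. -/
def SafetyP (O : Move kin kout → Move kin kout → Prop)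
    (C : Ctx kin kout Mem Extra Msg) (P : Prot kin kout Mem Extra) : Prop :=
  ∀ r ∈ Runs C P, ∀ m i j, i ≠ j → goingAt r m i → goingAt r m j →
    ∀ mi mj, moveAt (r m).1 i = some mi → moveAt (r m).1 j = some mj → O mi mj

/-- Liveness: every agent at the front of a queue eventually goes. -/
def LivenessP (C : Ctx kin kout Mem Extra Msg) (P : Prot kin kout Mem Extra) : Prop :=
  ∀ r ∈ Runs C P, ∀ m i, frontAt r m i → ∃ m' ≥ m, goingAt r m' i

/-- An intersection protocol: an action protocol satisfying Validity, Safety and Liveness. -/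
def IsIntersectionProtocol (O : Move kin kout → Move kin kout → Prop)
    (C : Ctx kin kout Mem Extra Msg) (P : Prot kin kout Mem Extra) : Prop :=
  ValidityP C P ∧ SafetyP O C P ∧ LivenessP C P

/-- `safe-to-go_i` at `(r,m)`: `i` is at the front of its queue (position 0) and the moves
of the agents in `GO(r,m) ∪ {i}` are pairwise compatible. -/
def safeToGo (O : Move kin kout → Move kin kout → Prop)
    (r : Run kin kout Mem Extra) (m i : ℕ) : Prop :=
  (∃ p, posAt (r m).1 i = some p ∧ p.2 = 0) ∧
  ∀ j ∈ GOs r m ∪ {i}, ∀ k ∈ GOs r m ∪ {i}, j ≠ k →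
    ∀ mj mk, moveAt (r m).1 j = some mj → moveAt (r m).1 k = some mk → O mj mk

/-- `P` has unnecessary waiting with respect to `γ`. -/
def UnnecessaryWaiting (O : Move kin kout → Move kin kout → Prop)
    (C : Ctx kin kout Mem Extra Msg) (P : Prot kin kout Mem Extra) : Prop :=
  ∃ r ∈ Runs C P, ∃ m i, safeToGo O r m i ∧ i ∉ GOs r m

/-- The time at which agent `i` goes through the intersection in run `r` (∞ if never). -/
def gotime (r : Run kin kout Mem Extra) (i : ℕ) : ℕ∞ :=
  sInf {n : ℕ∞ | ∃ m : ℕ, goingAt r m i ∧ n = (m : ℕ∞)}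

/-- `P` dominates `P'`: on all corresponding runs, every agent goes at least as early. -/
def Dominates (C : Ctx kin kout Mem Extra Msg) (P P' : Prot kin kout Mem Extra) : Prop :=
  ∀ r ∈ Runs C P, ∀ r' ∈ Runs C P', r 0 = r' 0 → ∀ i, gotime r i ≤ gotime r' i

def StrictDominates (C : Ctx kin kout Mem Extra Msg) (P P' : Prot kin kout Mem Extra) : Prop :=
  Dominates C P P' ∧ ¬ Dominates C P' P

/-- `P` is optimal: no intersection protocol strictly dominates it. -/
def Optimal (O : Move kin kout → Move kin kout → Prop)
    (C : Ctx kin kout Mem Extra Msg) (P : Prot kin kout Mem Extra) : Prop :=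
  ¬ ∃ P' : Prot kin kout Mem Extra,
      IsIntersectionProtocol O C P' ∧ StrictDominates C P' P

/-- `P` lexicographically dominates `P'`. -/
def LexDominates (C : Ctx kin kout Mem Extra Msg) (P P' : Prot kin kout Mem Extra) : Prop :=
  ∀ r ∈ Runs C P, ∀ r' ∈ Runs C P', r 0 = r' 0 →
    (∀ m, GOs r m = GOs r' m) ∨
    ∃ m, (∀ k < m, GOs r k = GOs r' k) ∧ GOs r m ≠ GOs r' m ∧ GOs r' m ⊂ GOs r m

def StrictLexDominates (C : Ctx kin kout Mem Extra Msg) (P P' : Prot kin kout Mem Extra) :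
    Prop :=
  LexDominates C P P' ∧ ¬ LexDominates C P' P

/-- `P` is lexicographically optimal: no intersection protocol strictly lexicographically
dominates it. -/
def LexOptimal (O : Move kin kout → Move kin kout → Prop)
    (C : Ctx kin kout Mem Extra Msg) (P : Prot kin kout Mem Extra) : Prop :=
  ¬ ∃ P' : Prot kin kout Mem Extra,
      IsIntersectionProtocol O C P' ∧ StrictLexDominates C P' P

/-- Knowledge: `K_i φ` holds at `(r,m)` iff `φ` holds at all points of the system where
agent `i` has the same local state. -/
def Kn (S : Set (Run kin kout Mem Extra)) (i : ℕ)
    (φ : Run kin kout Mem Extra → ℕ → Prop) (r : Run kin kout Mem Extra) (m : ℕ) : Prop :=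
  ∀ r' ∈ S, ∀ m', (r' m').2 i = (r m).2 i → φ r' m'

/-- The adversary model has no failures. -/
def NoFailures (C : Ctx kin kout Mem Extra Msg) : Prop :=
  ∀ α ∈ C.adv, ∀ k i, α.Ft k i = true ∧ α.Fr k i = true

/-- Full information exchange: every agent broadcasts (an injective encoding of) its
entire local state in every round, and records every broadcast it receives. -/
def FullInfo (C : Ctx kin kout Mem Extra Msg) : Prop :=
  (∃ enc : LState kin kout Mem Extra → Msg, Function.Injective enc ∧
      ∀ i s a o, C.iep.msg i s a o = some (enc s)) ∧
  (∀ i s a, Function.Injective fun B : Set Msg => C.iep.upd i s a B)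

/-- A sufficiently rich context: every agent that will be at the front of some lane
broadcasts a message encoding its lane and intent, tagged as coming from the front;
no other message is tagged as a front message; and each agent records the
(lane, intent) pair of each front agent it hears from. -/
def SufficientlyRich (C : Ctx kin kout Mem Extra Msg) : Prop :=
  ∃ dec : Msg → Option (Move kin kout),
    (∀ i s a (o : Reading kin kout × Extra) (l : Fin kin),
        o.1.front → o.1.lane = LaneStatus.inLane l →
        ∃ msg, C.iep.msg i s a o = some msg ∧ dec msg = some (l, o.1.intent)) ∧
    (∀ i s a (o : Reading kin kout × Extra), ¬ o.1.front →
        ∀ msg, C.iep.msg i s a o = some msg → dec msg = none) ∧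
    (∃ rec : Mem → Set (Move kin kout),
        ∀ i s a B, rec (C.iep.upd i s a B) = {mv | ∃ msg ∈ B, dec msg = some mv})

/-- The set of agents at the front of a queue. -/
def FrontSet (e : EnvState kin kout) : Set ℕ := {i | isFront e i}

/-- `P` depends only on the agents at the front of their queues. -/
def DependsOnlyOnFront (C : Ctx kin kout Mem Extra Msg) (P : Prot kin kout Mem Extra) :
    Prop :=
  ∀ r ∈ Runs C P, ∀ r' ∈ Runs C P, ∀ m m' i,
    FrontSet (r m).1 = FrontSet (r' m').1 → P i ((r m).2 i) = P i ((r' m').2 i)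

/-- The choices of an adversary in a single round: arrivals, the transmission
environment and the failure values. -/
structure Choice (kin kout : ℕ) where
  arrivals : Set (ℕ × Fin kin × Fin kout)
  T : Set ((Fin kin × ℕ) × (Fin kin × ℕ))
  Ft : ℕ → Bool
  Fr : ℕ → Bool

/-- The choices of adversary `α` in round `m+1`. -/
def choiceAt (α : Adversary kin kout) (m : ℕ) : Choice kin kout where
  arrivals := {p | α.arrive p.1 = (m + 1, p.2.1, p.2.2)}
  T := α.T
  Ft := fun i => α.Ft m i
  Fr := fun i => α.Fr m i

/-- The adversary history `H(α,m) = ⟨α_0, …, α_{m-1}⟩`. -/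
def hist (α : Adversary kin kout) (m : ℕ) : List (Choice kin kout) :=
  (List.range m).map (choiceAt α)

/-- The adversary history of run `r` up to time `m`. -/
def histOf (r : Run kin kout Mem Extra) (m : ℕ) : List (Choice kin kout) :=
  hist (r 0).1.adv m

/-- An intersection policy: a map from adversary histories to sets of permitted moves. -/
abbrev Policy (kin kout : ℕ) := List (Choice kin kout) → Set (Move kin kout)

/-- The set `H_γ` of adversary histories of the context. -/
def Hists (C : Ctx kin kout Mem Extra Msg) : Set (List (Choice kin kout)) :=
  {h | ∃ α ∈ C.adv, ∃ m, h = hist α m}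

/-- A feasible infinite sequence of histories: one arising from a single adversary. -/
def Feasible (F : Set (Adversary kin kout)) (h : ℕ → List (Choice kin kout)) : Prop :=
  ∃ α ∈ F, ∀ m, h m = hist α m

/-- Conflict-freedom of an intersection policy. -/
def ConflictFree (O : Move kin kout → Move kin kout → Prop)
    (C : Ctx kin kout Mem Extra Msg) (σ : Policy kin kout) : Prop :=
  ∀ h ∈ Hists C, ∀ mv ∈ σ h, ∀ mv' ∈ σ h, mv ≠ mv' → O mv mv'

/-- Fairness of an intersection policy. -/
def FairPolicy (C : Ctx kin kout Mem Extra Msg) (σ : Policy kin kout) : Prop :=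
  ∀ h : ℕ → List (Choice kin kout), Feasible C.adv h →
    ∀ mv : Move kin kout, ∀ m, ∃ m' ≥ m, mv ∈ σ (h m')

/-- A correct intersection policy: conflict-free and fair. -/
def CorrectPolicy (O : Move kin kout → Move kin kout → Prop)
    (C : Ctx kin kout Mem Extra Msg) (σ : Policy kin kout) : Prop :=
  ConflictFree O C σ ∧ FairPolicy C σ

/-- A synchronous context: the time is encoded in each agent's local state. -/
def Synchronous (C : Ctx kin kout Mem Extra Msg) : Prop :=
  ∃ clock : LState kin kout Mem Extra → ℕ,
    ∀ P : Prot kin kout Mem Extra, ∀ r ∈ Runs C P, ∀ m i, clock ((r m).2 i) = m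

/-- The knowledge condition of the knowledge-based program `P^σ`:
`front_i ∧ (lane_i, intent_i) ∈ σ`. -/
def phiSigma (σ : Policy kin kout) (i : ℕ) (r : Run kin kout Mem Extra) (m : ℕ) : Prop :=
  frontAt r m i ∧ ∃ mv, moveAt (r m).1 i = some mv ∧ mv ∈ σ (histOf r m)

/-- `P` implements the knowledge-based program `if K_i φ_i then go else noop` in `γ`. -/
def Implements (C : Ctx kin kout Mem Extra Msg) (P : Prot kin kout Mem Extra)
    (φ : ℕ → Run kin kout Mem Extra → ℕ → Prop) : Prop :=
  ∀ r ∈ Runs C P, ∀ m i, (P i ((r m).2 i) = Act.go ↔ Kn (Runs C P) i (φ i) r m)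

/-- Behavioral equivalence: the protocols take the same actions at all reachable states. -/
def BehEq (C : Ctx kin kout Mem Extra Msg) (P P' : Prot kin kout Mem Extra) : Prop :=
  (∀ r ∈ Runs C P, ∀ m i, P i ((r m).2 i) = P' i ((r m).2 i)) ∧
  (∀ r ∈ Runs C P', ∀ m i, P i ((r m).2 i) = P' i ((r m).2 i))

/-- `γ` is `σ`-aware. -/
def SigmaAware (C : Ctx kin kout Mem Extra Msg) (σ : Policy kin kout) : Prop :=
  ∀ P : Prot kin kout Mem Extra, ∀ r ∈ Runs C P, ∀ m i (l : Fin kin) (l' : Fin kout),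
    (l, l') ∈ σ (histOf r m) → i ∈ (r m).1.queue l →
    Kn (Runs C P) i (fun r' m' => (l, l') ∈ σ (histOf r' m')) r m

/-- `γ` is `next`-aware. -/
def NextAware (C : Ctx kin kout Mem Extra Msg)
    (next : List (Choice kin kout) → Fin kin) : Prop :=
  ∀ P : Prot kin kout Mem Extra, ∀ r ∈ Runs C P, ∀ m i (l : Fin kin),
    next (histOf r m) = l →
    Kn (Runs C P) i (fun r' m' => next (histOf r' m') = l) r m

/-- Cyclic distance from `a` to `b` (mod `kin`). -/
def distC (a b : Fin kin) : ℕ := (b.val + kin - a.val) % kin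

/-- `l` lies in the cyclic interval `[a, b)` of incoming lanes. -/
def inCyc (a b l : Fin kin) : Prop := distC a l < distC a b

/-- `mv` is compatible with every move in `S`. -/
def compatAll (O : Move kin kout → Move kin kout → Prop)
    (S : Set (Move kin kout)) (mv : Move kin kout) : Prop :=
  ∀ mv' ∈ S, O mv mv'

/-- The proposition `V_i` of the knowledge-based program `𝐏`. -/
def Vprop (O : Move kin kout → Move kin kout → Prop) (σ : Policy kin kout)
    (next : List (Choice kin kout) → Fin kin) (i : ℕ)
    (r : Run kin kout Mem Extra) (m : ℕ) : Prop :=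
  ∃ mv, moveAt (r m).1 i = some mv ∧ mv ∉ σ (histOf r m) ∧
    (∀ j mj, goingAt r m j → moveAt (r m).1 j = some mj →
        mj ∈ σ (histOf r m) → O mv mj) ∧
    (∀ j mj, j ≠ i → goingAt r m j → moveAt (r m).1 j = some mj →
        mj ∉ σ (histOf r m) → inCyc (next (histOf r m)) mv.1 mj.1 → O mv mj)

/-- The knowledge condition of the knowledge-based program `𝐏`:
`front_i ∧ ((lane_i, intent_i) ∈ σ ∨ V_i)`. -/
def phiP (O : Move kin kout → Move kin kout → Prop) (σ : Policy kin kout)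
    (next : List (Choice kin kout) → Fin kin) (i : ℕ)
    (r : Run kin kout Mem Extra) (m : ℕ) : Prop :=
  frontAt r m i ∧
    ((∃ mv, moveAt (r m).1 i = some mv ∧ mv ∈ σ (histOf r m)) ∨ Vprop O σ next i r m)

/-- Fairness of a `next` function. -/
def FairNext (C : Ctx kin kout Mem Extra Msg)
    (next : List (Choice kin kout) → Fin kin) : Prop :=
  ∀ h : ℕ → List (Choice kin kout), Feasible C.adv h →
    ∀ m (l : Fin kin), ∃ m' ≥ m, next (h m') = l

/-- Fairness of a pair `(σ, next)`. -/
def PairFair (O : Move kin kout → Move kin kout → Prop)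
    (C : Ctx kin kout Mem Extra Msg) (σ : Policy kin kout)
    (next : List (Choice kin kout) → Fin kin) : Prop :=
  ∀ h : ℕ → List (Choice kin kout), Feasible C.adv h →
    ∀ m (mv : Move kin kout), ∃ m' ≥ m,
      mv ∈ σ (h m') ∨ (next (h m') = mv.1 ∧ compatAll O (σ (h m')) mv)

/-- `next(h) = |h| mod |L_in|` at time `t`. -/
def nextL (hkin : 0 < kin) (t : ℕ) : Fin kin := ⟨t % kin, Nat.mod_lt _ hkin⟩

/-- The stages of the construction of the set `Pos_i`, starting from the lane `nxt` and
proceeding in cyclic order; `M` is the set of moves received from front agents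
(empty when there is no communication). -/
def posStage (hkin : 0 < kin) (O : Move kin kout → Move kin kout → Prop)
    (M : Set (Move kin kout)) (nxt : Fin kin) : ℕ → Set (Move kin kout)
  | 0 => ∅
  | t + 1 =>
    let S := posStage hkin O M nxt t
    let l : Fin kin := ⟨(nxt.val + t) % kin, Nat.mod_lt _ hkin⟩
    if ∃ l' : Fin kout, (l, l') ∈ M then
      S ∪ {mv | mv.1 = l ∧ mv ∈ M ∧ compatAll O S mv}
    else
      S ∪ {mv | mv.1 = l ∧ compatAll O S mv}

/-- The set `Pos_i` computed from the received moves `M`, the lane `nxt = next` and the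
agent's own lane `lanei`. -/
def PosSet (hkin : 0 < kin) (O : Move kin kout → Move kin kout → Prop)
    (M : Set (Move kin kout)) (nxt lanei : Fin kin) : Set (Move kin kout) :=
  posStage hkin O M nxt (distC nxt lanei)

/-- The stage `Pos_i^l` of the construction of `Pos_i`, for a lane `l` in the cyclic
interval `[nxt, lane_i)`. -/
def PosUpTo (hkin : 0 < kin) (O : Move kin kout → Move kin kout → Prop)
    (M : Set (Move kin kout)) (nxt l : Fin kin) : Set (Move kin kout) :=
  posStage hkin O M nxt (distC nxt l + 1)

/-- The adversary model with no failures. -/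
def NFadv (kin kout : ℕ) : Set (Adversary kin kout) :=
  {α | ∀ k i, α.Ft k i = true ∧ α.Fr k i = true}

/-- The adversary model with crash failures. -/
def CRadv (kin kout : ℕ) : Set (Adversary kin kout) :=
  {α | (∀ k i, α.Fr k i = true) ∧
    ∀ k i, α.Ft k i = false → ∀ k', k < k' → α.Ft k' i = false}

/-- The adversary model with sending omissions. -/
def SOadv (kin kout : ℕ) : Set (Adversary kin kout) :=
  {α | ∀ k i, α.Fr k i = true}

/-- The information-exchange protocol of `γ_∅`: a single memory state, no messages,
and sensor readings `⟨front_i, lane_i, intent_i, time_i⟩`. -/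
def E0 (kin kout : ℕ) : IEP kin kout Unit ℕ Empty where
  initMem _ := ()
  extra e _ := e.time
  msg _ _ _ _ := none
  upd _ _ _ _ := ()

/-- The context `γ_∅(F)`. -/
def gammaEmpty (kin kout : ℕ) (F : Set (Adversary kin kout)) : Ctx kin kout Unit ℕ Empty :=
  ⟨E0 kin kout, F⟩

/-- The protocol `P^∅`: go iff at the front and own move compatible with `Pos_i`. -/
def Pempty (hkin : 0 < kin) (O : Move kin kout → Move kin kout → Prop) :
    Prot kin kout Unit ℕ := fun _ s =>
  match s.2.1.lane with
  | LaneStatus.inLane l =>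
      if s.2.1.front ∧ compatAll O (PosSet hkin O ∅ (nextL hkin s.2.2) l) (l, s.2.1.intent)
      then Act.go else Act.noop
  | _ => Act.noop

/-- The information-exchange protocol of `γ_intent`: exactly the agents at the front of a
lane broadcast `(lane_i, intent_i)`; the memory is the set of moves received in the
current round; sensor readings are `⟨front_i, lane_i, intent_i, time_i⟩`. -/
def Eintent (kin kout : ℕ) : IEP kin kout (Set (Move kin kout)) ℕ (Move kin kout) where
  initMem _ := ∅
  extra e _ := e.time
  msg _ _ _ o :=
    if o.1.front then
      match o.1.lane with
      | LaneStatus.inLane l => some (l, o.1.intent)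
      | _ => none
    else none
  upd _ _ _ B := B

/-- The context `γ_intent(F)`. -/
def gammaIntent (kin kout : ℕ) (F : Set (Adversary kin kout)) :
    Ctx kin kout (Set (Move kin kout)) ℕ (Move kin kout) :=
  ⟨Eintent kin kout, F⟩

/-- The protocol `P^intent`: go iff at the front and own move compatible with `Pos_i`
computed from the received moves. -/
def Pintent (hkin : 0 < kin) (O : Move kin kout → Move kin kout → Prop) :
    Prot kin kout (Set (Move kin kout)) ℕ := fun _ s =>
  match s.2.1.lane with
  | LaneStatus.inLane l =>
      if s.2.1.front ∧
          compatAll O (PosSet hkin O s.1 (nextL hkin s.2.2) l) (l, s.2.1.intent)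
      then Act.go else Act.noop
  | _ => Act.noop

section AuxLemmas

variable {kin kout : ℕ} {Mem Extra Msg : Type*}
variable {E : IEP kin kout Mem Extra Msg}
variable {C : Ctx kin kout Mem Extra Msg} {P : Prot kin kout Mem Extra}
variable {r : Run kin kout Mem Extra}

lemma step_fst_adv (g : GState kin kout Mem Extra) :
    (step E P g).1.adv = g.1.adv := rfl

lemma step_fst_time (g : GState kin kout Mem Extra) :
    (step E P g).1.time = g.1.time + 1 := rfl

lemma step_queue (g : GState kin kout Mem Extra) (w : Fin kin) :
    (step E P g).1.queue w =
      (if h : ∃ i l', g.1.adv.arrive i = (g.1.time + 1, w, l') then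
        (match (g.1.queue w).head? with
          | some i => if P i (g.2 i) = Act.go then (g.1.queue w).tail else g.1.queue w
          | none => g.1.queue w) ++ [h.choose]
      else match (g.1.queue w).head? with
          | some i => if P i (g.2 i) = Act.go then (g.1.queue w).tail else g.1.queue w
          | none => g.1.queue w) := rfl

lemma adv_const (hr : r ∈ Runs C P) : ∀ n, (r n).1.adv = (r 0).1.adv := by
  intro n
  induction n with
  | zero => rfl
  | succ n ih => rw [hr.2 n, step_fst_adv]; exact ih

lemma time_eq (hr : r ∈ Runs C P) : ∀ n, (r n).1.time = n := by
  intro n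
  induction n with
  | zero => exact hr.1.2.1
  | succ n ih => rw [hr.2 n, step_fst_time, ih]


lemma mem_queue (hr : r ∈ Runs C P) : ∀ n w s, s ∈ (r n).1.queue w →
    ((r 0).1.adv.arrive s).2.1 = w ∧ 1 ≤ ((r 0).1.adv.arrive s).1 ∧
      ((r 0).1.adv.arrive s).1 ≤ n := by
  intro n
  induction n with
  | zero => intro w s hs; rw [hr.1.2.2.1 w] at hs; simp at hs
  | succ n ih =>
    intro w s hs
    rw [hr.2 n, step_queue] at hs
    have hadv := adv_const hr n
    have htime := time_eq hr n
    have hold : s ∈ (match ((r n).1.queue w).head? with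
          | some i => if P i ((r n).2 i) = Act.go then ((r n).1.queue w).tail
              else (r n).1.queue w
          | none => (r n).1.queue w) →
        ((r 0).1.adv.arrive s).2.1 = w ∧ 1 ≤ ((r 0).1.adv.arrive s).1 ∧
          ((r 0).1.adv.arrive s).1 ≤ n + 1 := by
      intro hmem
      have hs' : s ∈ (r n).1.queue w := by
        rcases hh : ((r n).1.queue w).head? with _ | j
        · rw [hh] at hmem; exact hmem
        · rw [hh] at hmem
          have hmem' : s ∈ (if P j ((r n).2 j) = Act.go then ((r n).1.queue w).tail
              else (r n).1.queue w) := hmem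
          by_cases hgo : P j ((r n).2 j) = Act.go
          · rw [if_pos hgo] at hmem'; exact List.mem_of_mem_tail hmem'
          · rw [if_neg hgo] at hmem'; exact hmem'
      obtain ⟨h1, h2, h3⟩ := ih w s hs'
      exact ⟨h1, h2, le_trans h3 (Nat.le_succ n)⟩
    split_ifs at hs with h
    · rcases List.mem_append.1 hs with hmem | hnew
      · exact hold hmem
      · have hsc : s = h.choose := List.mem_singleton.1 hnew
        obtain ⟨l', hc⟩ := h.choose_spec
        rw [← hsc] at hc
        rw [hadv, htime] at hc
        exact ⟨by rw [hc], by rw [hc]; omega, by rw [hc]⟩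
    · exact hold hs
/-- The dequeue part of the queue update in `step`. -/
def deq (P : Prot kin kout Mem Extra) (g : GState kin kout Mem Extra) (w : Fin kin) :
    List ℕ :=
  match (g.1.queue w).head? with
  | some i => if P i (g.2 i) = Act.go then (g.1.queue w).tail else g.1.queue w
  | none => g.1.queue w

lemma step_queue' (g : GState kin kout Mem Extra) (w : Fin kin) :
    (step E P g).1.queue w =
      if h : ∃ i l', g.1.adv.arrive i = (g.1.time + 1, w, l') then
        deq P g w ++ [h.choose] else deq P g w := rfl

lemma deq_subset (P : Prot kin kout Mem Extra) (g : GState kin kout Mem Extra)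
    (w : Fin kin) : ∀ s ∈ deq P g w, s ∈ g.1.queue w := by
  intro s hs
  unfold deq at hs
  rcases hh : (g.1.queue w).head? with _ | j <;> rw [hh] at hs
  · exact hs
  · have hs' : s ∈ (if P j (g.2 j) = Act.go then (g.1.queue w).tail else g.1.queue w) := hs
    by_cases hgo : P j (g.2 j) = Act.go
    · rw [if_pos hgo] at hs'; exact List.mem_of_mem_tail hs'
    · rw [if_neg hgo] at hs'; exact hs'

lemma deq_nodup (P : Prot kin kout Mem Extra) (g : GState kin kout Mem Extra)
    (w : Fin kin) (h : (g.1.queue w).Nodup) : (deq P g w).Nodup := by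
  unfold deq
  rcases hh : (g.1.queue w).head? with _ | j
  · exact h
  · show (if P j (g.2 j) = Act.go then (g.1.queue w).tail else g.1.queue w).Nodup
    by_cases hgo : P j (g.2 j) = Act.go
    · rw [if_pos hgo]; exact h.tail
    · rw [if_neg hgo]; exact h

lemma deq_go {P : Prot kin kout Mem Extra} {g : GState kin kout Mem Extra}
    {w : Fin kin} {j : ℕ} (hh : (g.1.queue w).head? = some j)
    (hgo : P j (g.2 j) = Act.go) : deq P g w = (g.1.queue w).tail := by
  unfold deq; rw [hh]; exact if_pos hgo

lemma deq_noop {P : Prot kin kout Mem Extra} {g : GState kin kout Mem Extra}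
    {w : Fin kin} {j : ℕ} (hh : (g.1.queue w).head? = some j)
    (hgo : ¬ P j (g.2 j) = Act.go) : deq P g w = g.1.queue w := by
  unfold deq; rw [hh]; exact if_neg hgo

lemma nodup_queue (hr : r ∈ Runs C P) : ∀ n w, ((r n).1.queue w).Nodup := by
  intro n
  induction n with
  | zero => intro w; rw [hr.1.2.2.1 w]; exact List.nodup_nil
  | succ n ih =>
    intro w
    rw [hr.2 n, step_queue']
    split_ifs with h
    · rw [List.nodup_append]
      refine ⟨deq_nodup P (r n) w (ih w), List.nodup_singleton _, ?_⟩
      intro s hs t hs' hst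
      have hsc : s = h.choose := hst.trans (List.mem_singleton.1 hs')
      obtain ⟨l', hc⟩ := h.choose_spec
      rw [← hsc] at hc
      have hmem := mem_queue hr n w s (deq_subset P (r n) w s hs)
      rw [adv_const hr n, time_eq hr n] at hc
      rw [hc] at hmem
      omega
    · exact deq_nodup P (r n) w (ih w)

/-- Lane uniqueness: an agent is in at most one queue. -/
lemma lane_unique (hr : r ∈ Runs C P) {n : ℕ} {w w' : Fin kin} {s : ℕ}
    (h : s ∈ (r n).1.queue w) (h' : s ∈ (r n).1.queue w') : w = w' := by
  have h1 := (mem_queue hr n w s h).1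
  have h2 := (mem_queue hr n w' s h').1
  rw [← h1, ← h2]
lemma head_mem {l : List ℕ} {s : ℕ} (h : l.head? = some s) : s ∈ l := by
  rcases l with _ | ⟨a, t⟩
  · simp at h
  · simp at h; rw [h]; exact List.mem_cons_self

lemma posAt_front (hr : r ∈ Runs C P) {n : ℕ} {w : Fin kin} {s : ℕ}
    (h : ((r n).1.queue w).head? = some s) : posAt (r n).1 s = some (w, 0) := by
  have hmem : s ∈ (r n).1.queue w := head_mem h
  have hex : ∃ l, s ∈ (r n).1.queue l := ⟨w, hmem⟩
  unfold posAt
  rw [dif_pos hex]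
  have hch : hex.choose = w := lane_unique hr hex.choose_spec hmem
  rw [hch]
  rcases hq : (r n).1.queue w with _ | ⟨a, t⟩
  · rw [hq] at h; simp at h
  · rw [hq] at h; simp at h
    rw [← h]
    simp [List.idxOf_cons_self]

lemma moveAt_front (hr : r ∈ Runs C P) {n : ℕ} {w : Fin kin} {s : ℕ}
    (h : ((r n).1.queue w).head? = some s) :
    moveAt (r n).1 s = some (w, intentOf (r n).1 s) := by
  unfold moveAt
  rw [posAt_front hr h]
  rfl

lemma front_lane (hr : r ∈ Runs C P) {n : ℕ} {w : Fin kin} {s : ℕ}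
    (hfr : isFront (r n).1 s) (hmem : s ∈ (r n).1.queue w) :
    ((r n).1.queue w).head? = some s := by
  obtain ⟨w', hw'⟩ := hfr
  have : w' = w := lane_unique hr (head_mem hw') hmem
  rw [← this]; exact hw'

lemma notFront_of_go (hr : r ∈ Runs C P) {n : ℕ} {w : Fin kin} {j : ℕ}
    (hh : ((r n).1.queue w).head? = some j) (hgo : P j ((r n).2 j) = Act.go) :
    ¬ isFront (r (n + 1)).1 j := by
  rintro ⟨w', hw'⟩
  have hj' : j ∈ (r (n + 1)).1.queue w' := head_mem hw'
  rw [hr.2 n, step_queue'] at hj'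
  have hnot : j ∉ deq P (r n) w' := by
    intro hd
    have hmem' := deq_subset P (r n) w' j hd
    have hww : w' = w := lane_unique hr hmem' (head_mem hh)
    rw [hww] at hd
    rw [deq_go hh hgo] at hd
    rcases hq : (r n).1.queue w with _ | ⟨a, t⟩
    · rw [hq] at hh; simp at hh
    · have hnd := nodup_queue hr n w
      rw [hq] at hnd hd hh
      simp at hh
      simp at hd
      rw [hh] at hnd
      exact (List.nodup_cons.1 hnd).1 hd
  split_ifs at hj' with h
  · rcases List.mem_append.1 hj' with h1 | h2
    · exact hnot h1
    · have hsc : j = h.choose := List.mem_singleton.1 h2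
      obtain ⟨l', hc⟩ := h.choose_spec
      rw [← hsc] at hc
      rw [adv_const hr n, time_eq hr n] at hc
      have hmem := mem_queue hr n w j (head_mem hh)
      rw [hc] at hmem
      omega
  · exact hnot hj'

lemma front_of_noop (hr : r ∈ Runs C P) {n : ℕ} {w : Fin kin} {j : ℕ}
    (hh : ((r n).1.queue w).head? = some j) (hgo : ¬ P j ((r n).2 j) = Act.go) :
    ((r (n + 1)).1.queue w).head? = some j := by
  rw [hr.2 n, step_queue', deq_noop hh hgo]
  rcases hq : (r n).1.queue w with _ | ⟨a, t⟩
  · rw [hq] at hh; simp at hh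
  · rw [hq] at hh; simp at hh
    split_ifs with h
    · simp [hh]
    · simp [hh]

lemma going_iff_go (hr : r ∈ Runs C P) {n : ℕ} {w : Fin kin} {j : ℕ}
    (hh : ((r n).1.queue w).head? = some j) :
    goingAt r n j ↔ P j ((r n).2 j) = Act.go := by
  constructor
  · intro hg
    by_contra hgo
    exact hg.2 ⟨w, front_of_noop hr hh hgo⟩
  · intro hgo
    exact ⟨⟨w, hh⟩, notFront_of_go hr hh hgo⟩
end AuxLemmas

section IntentLemmas

variable {kin kout : ℕ} {F : Set (Adversary kin kout)}
variable {P : Prot kin kout (Set (Move kin kout)) ℕ}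
variable {r : Run kin kout (Set (Move kin kout)) ℕ}

lemma reading_eq (hr : r ∈ Runs (gammaIntent kin kout F) P) (n s : ℕ) :
    ((r n).2 s).2.1 = minimalReading (r n).1 s := by
  cases n with
  | zero => rw [hr.1.2.2.2.2 s]
  | succ n => rw [hr.2 n]; rfl

lemma extra_eq (hr : r ∈ Runs (gammaIntent kin kout F) P) (n s : ℕ) :
    ((r n).2 s).2.2 = n := by
  cases n with
  | zero => rw [hr.1.2.2.2.2 s]; exact hr.1.2.1
  | succ n =>
    rw [hr.2 n]
    show (step (gammaIntent kin kout F).iep P (r n)).1.time = n + 1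
    rw [← hr.2 n]
    exact time_eq hr (n + 1)

lemma state_form (hr : r ∈ Runs (gammaIntent kin kout F) P) (n s : ℕ) :
    (r n).2 s = (((r n).2 s).1, minimalReading (r n).1 s, n) := by
  have h1 := reading_eq hr n s
  have h2 := extra_eq hr n s
  calc (r n).2 s = (((r n).2 s).1, ((r n).2 s).2.1, ((r n).2 s).2.2) := rfl
    _ = (((r n).2 s).1, minimalReading (r n).1 s, n) := by rw [h1, h2]

lemma minimalReading_lane (hr : r ∈ Runs (gammaIntent kin kout F) P) {n : ℕ}
    {w : Fin kin} {t : ℕ} (h : ((r n).1.queue w).head? = some t) :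
    (minimalReading (r n).1 t).lane = LaneStatus.inLane w := by
  have hex : ∃ l, t ∈ (r n).1.queue l := ⟨w, head_mem h⟩
  show (if h' : ∃ l, t ∈ (r n).1.queue l then LaneStatus.inLane h'.choose
      else if t ∈ (r n).1.done then LaneStatus.finished else LaneStatus.notArrived)
    = LaneStatus.inLane w
  rw [dif_pos hex]
  rw [show hex.choose = w from lane_unique hr hex.choose_spec (head_mem h)]

lemma move_unique (hr : r ∈ Runs (gammaIntent kin kout F) P) {n : ℕ} {w : Fin kin}
    {v : Fin kout} {t : ℕ} (hf : isFront (r n).1 t)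
    (hmv : moveAt (r n).1 t = some (w, v)) :
    ((r n).1.queue w).head? = some t ∧ v = intentOf (r n).1 t := by
  obtain ⟨w', hw'⟩ := hf
  rw [moveAt_front hr hw'] at hmv
  have h1 : w' = w := (Prod.mk.injEq _ _ _ _ ▸ Option.some.inj hmv).1
  have h2 : intentOf (r n).1 t = v := (Prod.mk.injEq _ _ _ _ ▸ Option.some.inj hmv).2
  exact ⟨h1 ▸ hw', h2.symm⟩
lemma snd_mem_step (g : GState kin kout (Set (Move kin kout)) ℕ) (s : ℕ) :
    ((step (Eintent kin kout) P g).2 s).1 =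
      if g.1.adv.Fr g.1.time s = true ∧
          (posAt (step (Eintent kin kout) P g).1 s).isSome = true then
        {mv | ∃ t pt ps,
          (Eintent kin kout).msg t (g.2 t) (P t (g.2 t))
            (minimalReading (step (Eintent kin kout) P g).1 t,
              (step (Eintent kin kout) P g).1.time) = some mv ∧
          g.1.adv.Ft g.1.time t = true ∧
          posAt (step (Eintent kin kout) P g).1 t = some pt ∧
          posAt (step (Eintent kin kout) P g).1 s = some ps ∧
          (pt, ps) ∈ g.1.adv.T}
      else ∅ := rfl
/-- The set of moves broadcast by front agents with working transmitters. -/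
def Mset (r : Run kin kout (Set (Move kin kout)) ℕ) (n : ℕ) : Set (Move kin kout) :=
  {mv | ∃ t, isFront (r n).1 t ∧ moveAt (r n).1 t = some mv ∧
    (r 0).1.adv.Ft (n - 1) t = true}

lemma mem_char (hr : r ∈ Runs (gammaIntent kin kout F) P) {n : ℕ} {s : ℕ}
    (hFr : (r 0).1.adv.Fr n s = true) (hfr : isFront (r (n + 1)).1 s) :
    ((r (n + 1)).2 s).1 = Mset r (n + 1) := by
  obtain ⟨wi, hwi⟩ := hfr
  have hstep : r (n + 1) = step (Eintent kin kout) P (r n) := hr.2 n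
  have hFr' : (r n).1.adv.Fr (r n).1.time s = true := by
    rw [adv_const hr n, time_eq hr n]; exact hFr
  have hposi : posAt (r (n + 1)).1 s = some (wi, 0) := posAt_front hr hwi
  conv_lhs => rw [hstep, snd_mem_step]
  rw [← hstep]
  rw [if_pos ⟨hFr', by rw [hposi]; rfl⟩]
  ext mv
  constructor
  · rintro ⟨t, pt, ps, hmsg, hft, hpt, hps, hT⟩
    by_cases hf : isFront (r (n + 1)).1 t
    · obtain ⟨w, hw⟩ := hf
      have hlane := minimalReading_lane hr hw
      have hfront : (minimalReading (r (n + 1)).1 t).front := ⟨w, hw⟩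
      unfold Eintent at hmsg
      simp only at hmsg
      rw [if_pos hfront, hlane] at hmsg
      have hmv : mv = (w, (minimalReading (r (n + 1)).1 t).intent) :=
        (Option.some.inj hmsg).symm
      refine ⟨t, ⟨w, hw⟩, ?_, ?_⟩
      · rw [moveAt_front hr hw, hmv]; rfl
      · rw [adv_const hr n, time_eq hr n] at hft
        simpa using hft
    · have hnf : ¬ (minimalReading (r (n + 1)).1 t).front := hf
      unfold Eintent at hmsg
      simp only at hmsg
      rw [if_neg hnf] at hmsg
      exact absurd hmsg (by simp)
  · rintro ⟨t, hf, hmv, hft⟩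
    obtain ⟨w, hw⟩ := hf
    have hlane := minimalReading_lane hr hw
    have hfront : (minimalReading (r (n + 1)).1 t).front := ⟨w, hw⟩
    refine ⟨t, (w, 0), (wi, 0), ?_, ?_, posAt_front hr hw, hposi, ?_⟩
    · unfold Eintent
      simp only
      rw [if_pos hfront, hlane]
      rw [moveAt_front hr hw] at hmv
      rw [← Option.some.inj hmv]
      rfl
    · rw [adv_const hr n, time_eq hr n]
      simpa using hft
    · rw [adv_const hr n]
      exact (r 0).1.adv.T_front w wi
lemma act_iff {hkin : 0 < kin} {O : Move kin kout → Move kin kout → Prop}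
    {r : Run kin kout (Set (Move kin kout)) ℕ}
    (hr : r ∈ Runs (gammaIntent kin kout F) (Pintent hkin O)) {n : ℕ} {w : Fin kin}
    {j : ℕ} (hh : ((r n).1.queue w).head? = some j) :
    Pintent hkin O j ((r n).2 j) = Act.go ↔
      compatAll O (PosSet hkin O ((r n).2 j).1 (nextL hkin n) w)
        (w, intentOf (r n).1 j) := by
  conv_lhs => rw [state_form hr n j]
  have hlane := minimalReading_lane hr hh
  have hfront : (minimalReading (r n).1 j).front := ⟨w, hh⟩
  unfold Pintent
  simp only [hlane]
  by_cases hc : compatAll O (PosSet hkin O ((r n).2 j).1 (nextL hkin n) w)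
      (w, intentOf (r n).1 j)
  · rw [if_pos ⟨hfront, fun mv hmv => hc mv hmv⟩]
    simp only [true_iff]
    exact fun mv hmv => hc mv hmv
  · rw [if_neg (fun hcon => hc (fun mv hmv => hcon.2 mv hmv))]
    constructor
    · intro h; exact absurd h (by simp)
    · intro h; exact absurd h hc
end IntentLemmas
section PosLemmas

variable {kin kout : ℕ} (hkin : 0 < kin) (O : Move kin kout → Move kin kout → Prop)
variable (M : Set (Move kin kout)) (nxt : Fin kin)

lemma distC_lt' {kin : ℕ} (hkin : 0 < kin) (a b : Fin kin) : distC a b < kin :=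
  Nat.mod_lt _ hkin

lemma posStage_succ_eq (t : ℕ) :
    posStage hkin O M nxt (t + 1) =
      if ∃ l' : Fin kout,
          ((⟨(nxt.val + t) % kin, Nat.mod_lt _ hkin⟩ : Fin kin), l') ∈ M then
        posStage hkin O M nxt t ∪
          {mv | mv.1 = (⟨(nxt.val + t) % kin, Nat.mod_lt _ hkin⟩ : Fin kin) ∧ mv ∈ M ∧
            compatAll O (posStage hkin O M nxt t) mv}
      else
        posStage hkin O M nxt t ∪
          {mv | mv.1 = (⟨(nxt.val + t) % kin, Nat.mod_lt _ hkin⟩ : Fin kin) ∧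
            compatAll O (posStage hkin O M nxt t) mv} := rfl

lemma posStage_mono {a b : ℕ} (h : a ≤ b) :
    posStage hkin O M nxt a ⊆ posStage hkin O M nxt b := by
  induction b with
  | zero => rw [Nat.le_zero.1 h]
  | succ b ih =>
    rcases Nat.lt_or_ge a (b + 1) with h' | h'
    · have hsub := ih (Nat.lt_succ_iff.1 h')
      refine hsub.trans ?_
      intro mv hmv
      rw [posStage_succ_eq]
      split_ifs <;> exact Set.mem_union_left _ hmv
    · rw [le_antisymm h h']

lemma laneAt_inj {s t : ℕ} (hs : s < kin) (ht : t < kin)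
    (h : (nxt.val + s) % kin = (nxt.val + t) % kin) : s = t := by
  have h' : Nat.ModEq kin (nxt.val + s) (nxt.val + t) := h
  have h2 : Nat.ModEq kin s t := Nat.ModEq.add_left_cancel' nxt.val h'
  have := h2
  unfold Nat.ModEq at this
  rw [Nat.mod_eq_of_lt hs, Nat.mod_eq_of_lt ht] at this
  exact this

lemma laneAt_distC (l : Fin kin) :
    (⟨(nxt.val + distC nxt l) % kin, Nat.mod_lt _ hkin⟩ : Fin kin) = l := by
  apply Fin.ext
  show (nxt.val + (l.val + kin - nxt.val) % kin) % kin = l.val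
  rw [Nat.add_mod_mod]
  have h1 : nxt.val + (l.val + kin - nxt.val) = l.val + kin := by
    have := nxt.isLt
    omega
  rw [h1, Nat.add_mod_right, Nat.mod_eq_of_lt l.isLt]

lemma posStage_extract : ∀ T, T ≤ kin → ∀ mv ∈ posStage hkin O M nxt T,
    ∀ t0, t0 < kin → mv.1 = (⟨(nxt.val + t0) % kin, Nat.mod_lt _ hkin⟩ : Fin kin) →
    compatAll O (posStage hkin O M nxt t0) mv ∧ ((∃ v, (mv.1, v) ∈ M) → mv ∈ M) := by
  intro T
  induction T with
  | zero => intro _ mv hmv; exact absurd hmv (by simp [posStage])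
  | succ T ih =>
    intro hT mv hmv t0 ht0 hlane
    rw [posStage_succ_eq] at hmv
    have hTk : T < kin := hT
    split_ifs at hmv with hex
    · rcases hmv with hmv | hmv
      · exact ih (le_of_lt hT) mv hmv t0 ht0 hlane
      · obtain ⟨h1, h2, h3⟩ := hmv
        have : t0 = T := laneAt_inj nxt ht0 hTk
          (congrArg Fin.val (hlane.symm.trans h1))
        rw [this]
        exact ⟨h3, fun _ => h2⟩
    · rcases hmv with hmv | hmv
      · exact ih (le_of_lt hT) mv hmv t0 ht0 hlane
      · obtain ⟨h1, h3⟩ := hmv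
        have ht0T : t0 = T := laneAt_inj nxt ht0 hTk
          (congrArg Fin.val (hlane.symm.trans h1))
        rw [ht0T]
        refine ⟨h3, fun hv => ?_⟩
        exfalso
        obtain ⟨v, hv⟩ := hv
        rw [h1] at hv
        exact hex ⟨v, hv⟩

lemma posStage_insert {T t0 : ℕ} (hT : t0 < T) {mv : Move kin kout}
    (hlane : mv.1 = (⟨(nxt.val + t0) % kin, Nat.mod_lt _ hkin⟩ : Fin kin))
    (hc : compatAll O (posStage hkin O M nxt t0) mv)
    (hM : (∃ v, (mv.1, v) ∈ M) → mv ∈ M) :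
    mv ∈ posStage hkin O M nxt T := by
  have h1 : mv ∈ posStage hkin O M nxt (t0 + 1) := by
    rw [posStage_succ_eq]
    split_ifs with hex
    · refine Set.mem_union_right _ ⟨hlane, hM ?_, hc⟩
      obtain ⟨v, hv⟩ := hex
      exact ⟨v, by rw [hlane]; exact hv⟩
    · exact Set.mem_union_right _ ⟨hlane, hc⟩
  exact posStage_mono hkin O M nxt hT h1

end PosLemmas
section Witness

variable {kin kout : ℕ}

/-- Lanes (other than the agent's own) occupied in the witness run. -/
def presW (li l : Fin kin) (M : Set (Move kin kout)) (w : Fin kin) : Prop :=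
  w ≠ li ∧ (w = l ∨ ∃ v, (w, v) ∈ M)

/-- Intents of the front agents in the witness run. -/
def intentW (l : Fin kin) (l' : Fin kout) (M : Set (Move kin kout)) (w : Fin kin) :
    Fin kout :=
  if w = l then l' else if h : ∃ v, (w, v) ∈ M then h.choose else l'

/-- The arrival schedule of the witness adversary. -/
def arriveW (m i : ℕ) (li l : Fin kin) (ι l' : Fin kout)
    (M : Set (Move kin kout)) (hkin : 0 < kin) (s : ℕ) : ℕ × Fin kin × Fin kout :=
  if s = i then (m, li, ι)
  else if h : ∃ w : Fin kin, s = i + 1 + w.val ∧ presW li l M w then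
    (m, h.choose, intentW l l' M h.choose)
  else (m + 1 + s, ⟨0, hkin⟩, l')

lemma arriveW_self (m i : ℕ) (li l : Fin kin) (ι l' : Fin kout)
    (M : Set (Move kin kout)) (hkin : 0 < kin) :
    arriveW m i li l ι l' M hkin i = (m, li, ι) := if_pos rfl

lemma arriveW_pres (m i : ℕ) (li l : Fin kin) (ι l' : Fin kout)
    (M : Set (Move kin kout)) (hkin : 0 < kin) {w : Fin kin} (hw : presW li l M w) :
    arriveW m i li l ι l' M hkin (i + 1 + w.val) = (m, w, intentW l l' M w) := by
  unfold arriveW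
  have hne : ¬ (i + 1 + w.val = i) := by omega
  rw [if_neg hne]
  have hex : ∃ w' : Fin kin, i + 1 + w.val = i + 1 + w'.val ∧ presW li l M w' :=
    ⟨w, rfl, hw⟩
  rw [dif_pos hex]
  have hch : hex.choose = w := by
    have := hex.choose_spec.1
    exact (Fin.ext (by omega)).symm
  rw [hch]

lemma arriveW_cases (m i : ℕ) (li l : Fin kin) (ι l' : Fin kout)
    (M : Set (Move kin kout)) (hkin : 0 < kin) (s : ℕ) :
    (s = i ∧ arriveW m i li l ι l' M hkin s = (m, li, ι)) ∨
    (∃ w : Fin kin, s = i + 1 + w.val ∧ presW li l M w ∧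
      arriveW m i li l ι l' M hkin s = (m, w, intentW l l' M w)) ∨
    (arriveW m i li l ι l' M hkin s = (m + 1 + s, ⟨0, hkin⟩, l')) := by
  by_cases h1 : s = i
  · exact Or.inl ⟨h1, by rw [h1]; exact arriveW_self m i li l ι l' M hkin⟩
  · by_cases h2 : ∃ w : Fin kin, s = i + 1 + w.val ∧ presW li l M w
    · obtain ⟨w, hw1, hw2⟩ := h2
      refine Or.inr (Or.inl ⟨w, hw1, hw2, ?_⟩)
      rw [hw1]; exact arriveW_pres m i li l ι l' M hkin hw2
    · refine Or.inr (Or.inr ?_)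
      unfold arriveW
      rw [if_neg h1, dif_neg h2]

/-- The witness adversary. -/
def advW (m i : ℕ) (li l : Fin kin) (ι l' : Fin kout) (M : Set (Move kin kout))
    (hkin : 0 < kin) : Adversary kin kout where
  arrive := arriveW m i li l ι l' M hkin
  conflictFree := by
    intro s1 s2 hne heq
    rcases arriveW_cases m i li l ι l' M hkin s1 with ⟨e1, h1⟩ | ⟨w1, e1, hp1, h1⟩ | h1 <;>
      rcases arriveW_cases m i li l ι l' M hkin s2 with ⟨e2, h2⟩ | ⟨w2, e2, hp2, h2⟩ | h2 <;>
        rw [h1, h2] at heq ⊢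
    · exact absurd (e1.trans e2.symm) hne
    · show li ≠ w2
      exact fun hc => hp2.1 hc.symm
    · have heq' : m = m + 1 + s2 := heq
      omega
    · show w1 ≠ li
      exact hp1.1
    · show w1 ≠ w2
      intro hc
      exact hne (by rw [e1, e2, hc])
    · have heq' : m = m + 1 + s2 := heq
      omega
    · have heq' : m + 1 + s1 = m := heq
      omega
    · have heq' : m + 1 + s1 = m := heq
      omega
    · have heq' : m + 1 + s1 = m + 1 + s2 := heq
      exact absurd (by omega : s1 = s2) hne
  T := Set.univ
  T_front := fun _ _ => Set.mem_univ _
  Ft := fun _ s => decide (((arriveW m i li l ι l' M hkin s).2.1,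
    (arriveW m i li l ι l' M hkin s).2.2) ∈ M)
  Fr := fun _ _ => true
/-- The initial global state for a given adversary. -/
def initW (α : Adversary kin kout) : GState kin kout (Set (Move kin kout)) ℕ :=
  (⟨α, 0, fun _ => [], ∅⟩,
    fun s => (∅, minimalReading ⟨α, 0, fun _ => [], ∅⟩ s, 0))

/-- The witness run: iterate `step` from the initial state. -/
def runW (P : Prot kin kout (Set (Move kin kout)) ℕ) (α : Adversary kin kout) :
    Run kin kout (Set (Move kin kout)) ℕ :=
  fun n => Nat.rec (initW α) (fun _ g => step (Eintent kin kout) P g) n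

lemma runW_mem {F : Set (Adversary kin kout)}
    {P : Prot kin kout (Set (Move kin kout)) ℕ} {α : Adversary kin kout}
    (hα : α ∈ F) : runW P α ∈ Runs (gammaIntent kin kout F) P :=
  ⟨⟨hα, rfl, fun _ => rfl, rfl, fun _ => rfl⟩, fun _ => rfl⟩

lemma runW_adv (P : Prot kin kout (Set (Move kin kout)) ℕ) (α : Adversary kin kout)
    (n : ℕ) : (runW P α n).1.adv = α :=
  adv_const (runW_mem (F := {α}) rfl) n

lemma advW_arrive (m i : ℕ) (li l : Fin kin) (ι l' : Fin kout)
    (M : Set (Move kin kout)) (hkin : 0 < kin) :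
    (advW m i li l ι l' M hkin).arrive = arriveW m i li l ι l' M hkin := rfl

lemma arriveW_unique {m i : ℕ} {li l : Fin kin} {ι l' : Fin kout}
    {M : Set (Move kin kout)} {hkin : 0 < kin} {s : ℕ} {w : Fin kin} {v : Fin kout}
    (hv : arriveW m i li l ι l' M hkin s = (m, w, v)) :
    s = (if w = li then i else i + 1 + w.val) ∧ (w = li ∨ presW li l M w) := by
  rcases arriveW_cases m i li l ι l' M hkin s with
    ⟨e1, h1⟩ | ⟨w1, e1, hp1, h1⟩ | h1
  · rw [h1] at hv
    have hw : li = w := congrArg (fun p => p.2.1) hv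
    rw [← hw]
    exact ⟨by rw [if_pos rfl]; exact e1, Or.inl rfl⟩
  · rw [h1] at hv
    have hw : w1 = w := congrArg (fun p => p.2.1) hv
    rw [← hw]
    refine ⟨by rw [if_neg hp1.1]; exact e1, Or.inr hp1⟩
  · rw [h1] at hv
    have : m + 1 + s = m := congrArg (fun p => p.1) hv
    omega

lemma runW_queue {m i : ℕ} {li l : Fin kin} {ι l' : Fin kout}
    {M : Set (Move kin kout)} {hkin : 0 < kin}
    {P : Prot kin kout (Set (Move kin kout)) ℕ}
    (hm : 1 ≤ m) :
    ∀ n ≤ m, ∀ w : Fin kin,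
      (runW P (advW m i li l ι l' M hkin) n).1.queue w =
        if n = m ∧ (w = li ∨ presW li l M w) then
          [if w = li then i else i + 1 + w.val] else [] := by
  have hrw := runW_mem (P := P) (F := {advW m i li l ι l' M hkin}) rfl
  set r' := runW P (advW m i li l ι l' M hkin) with hr'def
  intro n
  induction n with
  | zero =>
    intro _ w
    rw [if_neg (fun hc => by omega)]
    rfl
  | succ n ih =>
    intro hn w
    have hq0 : (r' n).1.queue w = [] := by
      rw [ih (by omega) w, if_neg (by omega)]
    have hstep : r' (n + 1) = step (Eintent kin kout) P (r' n) := rfl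
    have hadv : (r' n).1.adv = advW m i li l ι l' M hkin := runW_adv P _ n
    have htime : (r' n).1.time = n := time_eq hrw n
    have hdeq : deq P (r' n) w = [] := by
      unfold deq
      rw [hq0]
      rfl
    rw [hstep, step_queue']
    simp only [hadv, htime, advW_arrive, hdeq]
    by_cases hc : n + 1 = m ∧ (w = li ∨ presW li l M w)
    · rw [if_pos hc]
      obtain ⟨hnm, hw⟩ := hc
      have hex : ∃ s v, arriveW m i li l ι l' M hkin s = (n + 1, w, v) := by
        rw [hnm]
        rcases hw with hw | hw
        · exact ⟨i, ι, by rw [hw]; exact arriveW_self m i li l ι l' M hkin⟩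
        · exact ⟨i + 1 + w.val, intentW l l' M w, arriveW_pres m i li l ι l' M hkin hw⟩
      rw [dif_pos hex]
      obtain ⟨v, hv⟩ := hex.choose_spec
      have hv' : arriveW m i li l ι l' M hkin hex.choose = (m, w, v) := by
        exact hv.trans (by rw [hnm])
      rw [(arriveW_unique hv').1]
      rfl
    · rw [if_neg hc]
      have hnex : ¬ ∃ s v, arriveW m i li l ι l' M hkin s = (n + 1, w, v) := by
        rintro ⟨s, v, hv⟩
        by_cases hnm : n + 1 = m
        · have hv' : arriveW m i li l ι l' M hkin s = (m, w, v) :=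
            hv.trans (by rw [hnm])
          obtain ⟨_, h2⟩ := arriveW_unique hv'
          exact hc ⟨hnm, h2⟩
        · rcases arriveW_cases m i li l ι l' M hkin s with
            ⟨e1, h1⟩ | ⟨w1, e1, hp1, h1⟩ | h1 <;> rw [h1] at hv
          · exact hnm (congrArg (fun p => p.1) hv).symm
          · exact hnm (congrArg (fun p => p.1) hv).symm
          · have : m + 1 + s = n + 1 := congrArg (fun p => p.1) hv
            omega
      rw [dif_neg hnex]

end Witness
section MainPrep

variable {kin kout : ℕ}

lemma reading_ext {a b : Reading kin kout} (h1 : a.front = b.front)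
    (h2 : a.lane = b.lane) (h3 : a.intent = b.intent) : a = b := by
  cases a; cases b
  simp only at h1 h2 h3
  rw [h1, h2, h3]

lemma mem_char'' {F : Set (Adversary kin kout)}
    {P : Prot kin kout (Set (Move kin kout)) ℕ}
    {r : Run kin kout (Set (Move kin kout)) ℕ}
    (hr : r ∈ Runs (gammaIntent kin kout F) P) {n s : ℕ} (hn : 1 ≤ n)
    (hFr : ∀ k t, (r 0).1.adv.Fr k t = true) (hfr : isFront (r n).1 s) :
    ((r n).2 s).1 = Mset r n := by
  obtain ⟨k, rfl⟩ : ∃ k, n = k + 1 := ⟨n - 1, by omega⟩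
  exact mem_char hr (hFr k s) hfr

lemma Fr_of_F {F : Set (Adversary kin kout)}
    (hF : F ∈ ({CRadv kin kout, SOadv kin kout} : Set (Set (Adversary kin kout))))
    {α : Adversary kin kout} (hα : α ∈ F) : ∀ k t, α.Fr k t = true := by
  rcases hF with hF | hF
  · rw [hF] at hα; exact hα.1
  · rw [hF] at hα; exact hα

lemma advW_in_F {F : Set (Adversary kin kout)}
    (hF : F ∈ ({CRadv kin kout, SOadv kin kout} : Set (Set (Adversary kin kout))))
    (m i : ℕ) (li l : Fin kin) (ι l' : Fin kout) (M : Set (Move kin kout))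
    (hkin : 0 < kin) : advW m i li l ι l' M hkin ∈ F := by
  rcases hF with hF | hF
  · rw [hF]
    exact ⟨fun _ _ => rfl, fun k s h k' _ => h⟩
  · rw [hF]
    exact fun _ _ => rfl

lemma histOf_length {Mem Extra : Type*} (r : Run kin kout Mem Extra) (m : ℕ) :
    (histOf r m).length = m := by
  simp [histOf, hist]

end MainPrep
end Inter

open Inter

/-- For `F ∈ {CR, SO}`, at a point `(r,m)` of the system of `P^intent`
in `γ_intent(F)` where agent `i` is at the front of lane `li`, a move `(l,l')` with
`l ∈ [next(r,m), li)` is in `Pos_i(r,m)` iff `i` considers it possible that some agent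
`j` at the front of lane `l` with intent `l'` is going. -/
theorem Pintent_Pos_characterization
    {kin kout : ℕ} (hkin : 0 < kin)
    (O : Move kin kout → Move kin kout → Prop)
    (hO : ∀ a b, O a b → O b a)
    (F : Set (Adversary kin kout))
    (hF : F ∈ ({CRadv kin kout, SOadv kin kout} : Set (Set (Adversary kin kout))))
    (r : Run kin kout (Set (Move kin kout)) ℕ)
    (hr : r ∈ Runs (gammaIntent kin kout F) (Pintent hkin O)) (m : ℕ)
    (i : ℕ) (li : Fin kin)
    (hi : ((r m).1.queue li).head? = some i)
    (l : Fin kin) (l' : Fin kout)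
    (hl : inCyc (nextL hkin (histOf r m).length) li l) :
    (l, l') ∈ PosSet hkin O ((r m).2 i).1 (nextL hkin (histOf r m).length) li ↔
      ¬ Kn (Runs (gammaIntent kin kout F) (Pintent hkin O)) i
          (fun r' m' => ¬ ∃ j : ℕ, frontAt r' m' j ∧ j ∈ (r' m').1.queue l ∧
            intentOf (r' m').1 j = l' ∧ goingAt r' m' j) r m := by
  classical
  have hlen : (histOf r m).length = m := histOf_length r m
  rw [hlen] at hl ⊢
  have hm1 : 1 ≤ m := by
    rcases Nat.eq_zero_or_pos m with h0 | h1
    · exfalso; rw [h0] at hi; rw [hr.1.2.2.1 li] at hi; simp at hi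
    · exact h1
  set nxt := nextL hkin m with hnxt
  have hFr : ∀ k t, (r 0).1.adv.Fr k t = true := Fr_of_F hF hr.1.1
  have hfr_i : isFront (r m).1 i := ⟨li, hi⟩
  have hMeq : ((r m).2 i).1 = Mset r m := mem_char'' hr hm1 hFr hfr_i
  set M := ((r m).2 i).1 with hMdef
  set ι := intentOf (r m).1 i with hιdef
  have hMfront : ∀ (w : Fin kin) (v : Fin kout), (w, v) ∈ M →
      ∃ t, ((r m).1.queue w).head? = some t ∧ v = intentOf (r m).1 t := by
    intro w v hv
    rw [hMeq] at hv
    obtain ⟨t, hfr, hmv, _⟩ := hv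
    obtain ⟨hhead, hint⟩ := move_unique hr hfr hmv
    exact ⟨t, hhead, hint⟩
  have hMuniq : ∀ (w : Fin kin) (v1 v2 : Fin kout),
      (w, v1) ∈ M → (w, v2) ∈ M → v1 = v2 := by
    intro w v1 v2 h1 h2
    obtain ⟨t1, hh1, hi1⟩ := hMfront w v1 h1
    obtain ⟨t2, hh2, hi2⟩ := hMfront w v2 h2
    have ht : t1 = t2 := Option.some.inj (hh1.symm.trans hh2)
    rw [hi1, hi2, ht]
  have hMli : ∀ v, (li, v) ∈ M → v = ι := by
    intro v hv
    obtain ⟨t, hh, hint⟩ := hMfront li v hv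
    have ht : t = i := Option.some.inj (hh.symm.trans hi)
    rw [hint, ht]
  have hlne : l ≠ li := by
    intro hc
    rw [hc] at hl
    exact lt_irrefl _ hl
  constructor
  · -- membership implies not knowing
    intro hmem hK
    have hext := posStage_extract hkin O M nxt (distC nxt li)
      (le_of_lt (distC_lt' hkin nxt li)) (l, l') hmem (distC nxt l)
      (distC_lt' hkin nxt l) (laneAt_distC hkin nxt l).symm
    have hcompS : compatAll O (posStage hkin O M nxt (distC nxt l)) (l, l') := hext.1
    have hMbr : (∃ v, (l, v) ∈ M) → (l, l') ∈ M := hext.2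
    have hMl : ∀ v, (l, v) ∈ M → v = l' := fun v hv =>
      hMuniq l v l' hv (hMbr ⟨v, hv⟩)
    set α' := advW m i li l ι l' M hkin with hα'def
    have hα'F : α' ∈ F := advW_in_F hF m i li l ι l' M hkin
    set r2 := runW (Pintent hkin O) α' with hr2def
    have hr2 : r2 ∈ Runs (gammaIntent kin kout F) (Pintent hkin O) := runW_mem hα'F
    have hFr2 : ∀ k t, (r2 0).1.adv.Fr k t = true := fun _ _ => rfl
    have hQ := runW_queue (P := Pintent hkin O) (m := m) (i := i) (li := li) (l := l)
      (ι := ι) (l' := l') (M := M) (hkin := hkin) hm1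
    have hqli : (r2 m).1.queue li = [i] := by
      rw [hQ m le_rfl li, if_pos ⟨rfl, Or.inl rfl⟩, if_pos rfl]
    have hpresl : presW li l M l := ⟨hlne, Or.inl rfl⟩
    set j := i + 1 + l.val with hjdef
    have hqj : (r2 m).1.queue l = [j] := by
      rw [hQ m le_rfl l, if_pos ⟨rfl, Or.inr hpresl⟩, if_neg hlne]
    have hheadli : ((r2 m).1.queue li).head? = some i := by rw [hqli]; rfl
    have hheadl : ((r2 m).1.queue l).head? = some j := by rw [hqj]; rfl
    have hintf2 : ∀ t, intentOf (r2 m).1 t = (α'.arrive t).2.2 := by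
      intro t
      unfold intentOf
      rw [show (r2 m).1.adv = α' from runW_adv (Pintent hkin O) α' m]
    have hft2 : ∀ k t, (r2 0).1.adv.Ft k t =
        decide (((arriveW m i li l ι l' M hkin t).2.1,
          (arriveW m i li l ι l' M hkin t).2.2) ∈ M) := fun _ _ => rfl
    have harr : ∀ w : Fin kin, (w = li ∨ presW li l M w) →
        α'.arrive (if w = li then i else i + 1 + w.val) =
          (m, w, if w = li then ι else intentW l l' M w) := by
      intro w hw
      rcases hw with hw | hw
      · rw [hw, if_pos rfl, if_pos rfl]
        exact arriveW_self m i li l ι l' M hkin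
      · rw [if_neg hw.1, if_neg hw.1]
        exact arriveW_pres m i li l ι l' M hkin hw
    have hintW_M : ∀ w : Fin kin, ∀ v : Fin kout, (w, v) ∈ M → w ≠ li →
        intentW l l' M w = v := by
      intro w v hv hwli
      unfold intentW
      by_cases hwl : w = l
      · rw [if_pos hwl]
        rw [hwl] at hv
        exact (hMl v hv).symm
      · rw [if_neg hwl, dif_pos ⟨v, hv⟩]
        exact hMuniq w _ v (Exists.choose_spec (⟨v, hv⟩ : ∃ u, (w, u) ∈ M)) hv
    have hfront2 : ∀ t, isFront (r2 m).1 t →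
        ∃ w : Fin kin, (w = li ∨ presW li l M w) ∧
          t = (if w = li then i else i + 1 + w.val) ∧
          ((r2 m).1.queue w).head? = some t := by
      rintro t ⟨w, hw⟩
      refine ⟨w, ?_, ?_, hw⟩
      · by_contra hc
        rw [hQ m le_rfl w, if_neg (fun hcc => hc hcc.2)] at hw
        simp at hw
      · by_cases hc : w = li ∨ presW li l M w
        · rw [hQ m le_rfl w, if_pos ⟨rfl, hc⟩] at hw
          exact (Option.some.inj hw).symm
        · rw [hQ m le_rfl w, if_neg (fun hcc => hc hcc.2)] at hw
          simp at hw
    have hMset2 : Mset r2 m = M := by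
      ext mv
      constructor
      · rintro ⟨t, hfr, hmv, hft⟩
        obtain ⟨w, hw, ht, hhead⟩ := hfront2 t hfr
        rw [moveAt_front hr2 hhead] at hmv
        have harr' := harr w hw
        rw [← ht] at harr'
        have hftP : ((arriveW m i li l ι l' M hkin t).2.1,
            (arriveW m i li l ι l' M hkin t).2.2) ∈ M := by
          rw [hft2] at hft
          exact of_decide_eq_true hft
        have harr2 : arriveW m i li l ι l' M hkin t =
            (m, w, if w = li then ι else intentW l l' M w) := harr'
        rw [harr2] at hftP
        have hmveq : mv = (w, (if w = li then ι else intentW l l' M w)) := by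
          rw [← Option.some.inj hmv]
          rw [hintf2 t]
          have : (α'.arrive t).2.2 = (if w = li then ι else intentW l l' M w) := by
            rw [harr']
          rw [this]
        rw [hmveq]
        exact hftP
      · intro hmvM
        obtain ⟨w, v⟩ := mv
        have hpres : w = li ∨ presW li l M w := by
          by_cases hwli : w = li
          · exact Or.inl hwli
          · exact Or.inr ⟨hwli, Or.inr ⟨v, hmvM⟩⟩
        set t := (if w = li then i else i + 1 + w.val) with htdef
        have hhead : ((r2 m).1.queue w).head? = some t := by
          rw [hQ m le_rfl w, if_pos ⟨rfl, hpres⟩]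
          rfl
        have hveq : (if w = li then ι else intentW l l' M w) = v := by
          by_cases hwli : w = li
          · rw [if_pos hwli]
            rw [hwli] at hmvM
            exact (hMli v hmvM).symm
          · rw [if_neg hwli]
            exact hintW_M w v hmvM hwli
        have hintt : intentOf (r2 m).1 t = v := by
          rw [hintf2 t, harr w hpres, ← hveq]
        refine ⟨t, ⟨w, hhead⟩, ?_, ?_⟩
        · rw [moveAt_front hr2 hhead, hintt]
        · rw [hft2]
          apply decide_eq_true
          have harr2 : arriveW m i li l ι l' M hkin t =
              (m, w, if w = li then ι else intentW l l' M w) := harr w hpres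
          rw [harr2]
          show (w, if w = li then ι else intentW l l' M w) ∈ M
          rw [hveq]
          exact hmvM
    have hMi2 : ((r2 m).2 i).1 = M := by
      rw [mem_char'' hr2 hm1 hFr2 ⟨li, hheadli⟩, hMset2]
    have hread2 : minimalReading (r2 m).1 i = minimalReading (r m).1 i := by
      apply reading_ext
      · show (isFront (r2 m).1 i : Prop) = isFront (r m).1 i
        exact propext (iff_of_true ⟨li, hheadli⟩ ⟨li, hi⟩)
      · rw [minimalReading_lane hr2 hheadli, minimalReading_lane hr hi]
      · show intentOf (r2 m).1 i = intentOf (r m).1 i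
        rw [hintf2 i]
        have : α'.arrive i = (m, li, ι) := arriveW_self m i li l ι l' M hkin
        rw [this]
    have hst2 : (r2 m).2 i = (r m).2 i := by
      rw [state_form hr2 m i, state_form hr m i, hMi2, hread2]
    have hint_j : intentOf (r2 m).1 j = l' := by
      rw [hintf2 j]
      have : α'.arrive j = (m, l, intentW l l' M l) :=
        arriveW_pres m i li l ι l' M hkin hpresl
      rw [this]
      show intentW l l' M l = l'
      unfold intentW
      rw [if_pos rfl]
    have hMj2 : ((r2 m).2 j).1 = M := by
      rw [mem_char'' hr2 hm1 hFr2 ⟨l, hheadl⟩, hMset2]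
    have hact : Pintent hkin O j ((r2 m).2 j) = Act.go := by
      rw [act_iff hr2 hheadl, hMj2, hint_j]
      exact hcompS
    have hgoing : goingAt r2 m j := (going_iff_go hr2 hheadl).2 hact
    exact hK r2 hr2 m hst2 ⟨j, ⟨l, hheadl⟩, head_mem hheadl, hint_j, hgoing⟩
  · -- not knowing implies membership
    intro hnK
    by_contra hmem
    apply hnK
    intro r'' hr'' m'' hst
    rintro ⟨j, hfrj, hjq, hintj, hgoj⟩
    have hm'' : m = m'' := by
      have h1 := extra_eq hr'' m'' i
      rw [hst] at h1
      rw [extra_eq hr m i] at h1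
      exact h1
    rw [← hm''] at hfrj hjq hintj hgoj hst
    have hfri'' : isFront (r'' m).1 i := by
      have e1 := reading_eq hr'' m i
      have e2 := reading_eq hr m i
      have hrd : minimalReading (r'' m).1 i = minimalReading (r m).1 i := by
        rw [← e1, ← e2, hst]
      have hfp : (isFront (r'' m).1 i : Prop) = isFront (r m).1 i :=
        congrArg Reading.front hrd
      rw [hfp]
      exact hfr_i
    have hFr'' : ∀ k t, (r'' 0).1.adv.Fr k t = true := Fr_of_F hF hr''.1.1
    have hMi'' : ((r'' m).2 i).1 = M := congrArg Prod.fst hst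
    have hMset'' : Mset r'' m = M := by
      rw [← mem_char'' hr'' hm1 hFr'' hfri'', hMi'']
    have hjhead : ((r'' m).1.queue l).head? = some j := front_lane hr'' hfrj hjq
    have hact : Pintent hkin O j ((r'' m).2 j) = Act.go :=
      (going_iff_go hr'' hjhead).1 hgoj
    have hcomp := (act_iff hr'' hjhead).1 hact
    have hMj'' : ((r'' m).2 j).1 = M := by
      rw [mem_char'' hr'' hm1 hFr'' ⟨l, hjhead⟩, hMset'']
    rw [hMj'', hintj] at hcomp
    have hMbr : (∃ v, (((l, l') : Move kin kout).1, v) ∈ M) → (l, l') ∈ M := by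
      rintro ⟨v, hv⟩
      have hv' : ((l : Fin kin), v) ∈ Mset r'' m := hMset''.symm ▸ hv
      obtain ⟨t, hfrt, hmvt, _⟩ := hv'
      obtain ⟨hheadt, hintt⟩ := move_unique hr'' hfrt hmvt
      have htj : t = j := Option.some.inj (hheadt.symm.trans hjhead)
      have hvl : v = l' := by rw [hintt, htj, hintj]
      rw [← hvl]
      exact hv
    apply hmem
    exact posStage_insert hkin O M nxt hl (laneAt_distC hkin nxt l).symm hcomp hMbr
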